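/- Let G be a graph of order n whose vertex independence number satisfies α(G) = 2, i.e., the maximum cardinality of an independent set of vertices of G equals 2. Then IC(G) = n. -/

import Mathlib

namespace ICNL

variable {V : Type*}

/-- `S` is a dominating set of `G`. -/
def Dominating (G : SimpleGraph V) (S : Set V) : Prop :=
  ∀ v : V, v ∈ S ∨ ∃ u ∈ S, G.Adj u v

/-- `S` is an independent set of `G`. -/
def IndepSet (G : SimpleGraph V) (S : Set V) : Prop :=
  ∀ ⦃u : V⦄, u ∈ S → ∀ ⦃v : V⦄, v ∈ S → ¬ G.Adj u v

/-- `S` is an independent dominating set of `G`. -/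
def IndepDom (G : SimpleGraph V) (S : Set V) : Prop :=
  IndepSet G S ∧ Dominating G S

/-- `A` and `B` form an independent coalition in `G`. -/
def ICCoalition (G : SimpleGraph V) (A B : Set V) : Prop :=
  Disjoint A B ∧ IndepSet G A ∧ IndepSet G B ∧
    ¬ IndepDom G A ∧ ¬ IndepDom G B ∧ IndepDom G (A ∪ B)

/-- `π` is a partition of the vertex set into nonempty classes. -/
def IsPartition (π : Finset (Finset V)) : Prop :=
  (∀ A ∈ π, A.Nonempty) ∧ ∀ v : V, ∃! A : Finset V, A ∈ π ∧ v ∈ A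

/-- `π` is an independent coalition partition of `G`. -/
def IsICPartition (G : SimpleGraph V) (π : Finset (Finset V)) : Prop :=
  IsPartition π ∧
    ∀ A ∈ π, (∃ v : V, (A : Set V) = {v} ∧ Dominating G (A : Set V)) ∨
      (¬ IndepDom G (A : Set V) ∧
        ∃ B ∈ π, B ≠ A ∧ ICCoalition G (A : Set V) (B : Set V))

/-- The independent coalition number: the maximum number of classes of an
ic-partition of `G`. -/
noncomputable def IC (G : SimpleGraph V) : ℕ :=
  sSup {k | ∃ π : Finset (Finset V), IsICPartition G π ∧ π.card = k}


/-- The vertex independence number: the maximum cardinality of an independent set of `G`. -/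
noncomputable def indepNumber (G : SimpleGraph V) : ℕ :=
  sSup {k | ∃ S : Set V, IndepSet G S ∧ S.ncard = k}

theorem stmt_17 {V : Type*} [Fintype V] (G : SimpleGraph V) (n : ℕ)
    (hn : Fintype.card V = n) (hα : indepNumber G = 2) :
    IC G = n := by
  classical
  subst hn
  -- boundedness of the indep-set cardinality set
  have hbdd : BddAbove {k | ∃ S : Set V, IndepSet G S ∧ S.ncard = k} := by
    refine ⟨Fintype.card V, ?_⟩
    rintro k ⟨S, -, rfl⟩
    have := Set.ncard_le_ncard (Set.subset_univ S) Set.finite_univ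
    simpa [Set.ncard_univ] using this
  -- no independent set of three vertices
  have no3 : ∀ a b c : V, a ≠ b → a ≠ c → b ≠ c →
      ¬G.Adj a b → ¬G.Adj a c → ¬G.Adj b c → False := by
    intro a b c hab hac hbc nab nac nbc
    have hind : IndepSet G {a, b, c} := by
      intro u hu v hv hadj
      simp only [Set.mem_insert_iff, Set.mem_singleton_iff] at hu hv
      rcases hu with rfl | rfl | rfl <;> rcases hv with rfl | rfl | rfl <;>
        first
        | exact G.loopless.irrefl _ hadj
        | exact nab hadj
        | exact nac hadj
        | exact nbc hadj
        | exact nab hadj.symm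
        | exact nac hadj.symm
        | exact nbc hadj.symm
    have hcard : ({a, b, c} : Set V).ncard = 3 := by
      rw [Set.ncard_eq_three]; exact ⟨a, b, c, hab, hac, hbc, rfl⟩
    have h3 : (3 : ℕ) ≤ indepNumber G := le_csSup hbdd ⟨{a, b, c}, hind, hcard⟩
    rw [hα] at h3; omega
  -- any two distinct nonadjacent vertices dominate
  have hpair : ∀ v w : V, v ≠ w → ¬G.Adj v w → Dominating G {v, w} := by
    intro v w hvw hadj x
    by_cases hxv : x = v
    · exact Or.inl (by simp [hxv])
    by_cases hxw : x = w
    · exact Or.inl (by simp [hxw])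
    by_cases h1 : G.Adj v x
    · exact Or.inr ⟨v, by simp, h1⟩
    by_cases h2 : G.Adj w x
    · exact Or.inr ⟨w, by simp, h2⟩
    exact absurd (no3 v w x hvw (Ne.symm hxv) (Ne.symm hxw) hadj h1 h2) (by simp)
  -- the singleton partition
  set π : Finset (Finset V) := Finset.univ.image (fun v => ({v} : Finset V)) with hπdef
  have hmemπ : ∀ A, A ∈ π ↔ ∃ v, A = {v} := by
    intro A; simp [hπdef, eq_comm]
  have hpart : IsPartition π := by
    constructor
    · intro A hA
      obtain ⟨v, rfl⟩ := (hmemπ A).1 hA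
      exact ⟨v, Finset.mem_singleton_self v⟩
    · intro v
      refine ⟨{v}, ⟨(hmemπ _).2 ⟨v, rfl⟩, Finset.mem_singleton_self v⟩, ?_⟩
      rintro B ⟨hB, hvB⟩
      obtain ⟨u, rfl⟩ := (hmemπ B).1 hB
      simp only [Finset.mem_singleton] at hvB
      subst hvB; rfl
  have hic : IsICPartition G π := by
    refine ⟨hpart, ?_⟩
    intro A hA
    obtain ⟨v, rfl⟩ := (hmemπ A).1 hA
    by_cases hd : Dominating G ({v} : Set V)
    · exact Or.inl ⟨v, Finset.coe_singleton v, by simpa using hd⟩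
    · right
      have hnid : ¬IndepDom G (({v} : Finset V) : Set V) := by
        rintro ⟨-, hdom⟩
        exact hd (by simpa using hdom)
      refine ⟨hnid, ?_⟩
      -- obtain a vertex not dominated by v
      simp only [Dominating, not_forall] at hd
      obtain ⟨w, hw⟩ := hd
      push_neg at hw
      obtain ⟨hw1, hw2⟩ := hw
      have hwv : w ≠ v := by simpa using hw1
      have hadj : ¬G.Adj v w := hw2 v rfl
      refine ⟨{w}, (hmemπ _).2 ⟨w, rfl⟩, by simpa using hwv, ?_⟩
      have hindv : IndepSet G (({v} : Finset V) : Set V) := by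
        intro a ha b hb hab
        simp only [Finset.coe_singleton, Set.mem_singleton_iff] at ha hb
        subst ha; subst hb; exact G.loopless.irrefl _ hab
      have hindw : IndepSet G (({w} : Finset V) : Set V) := by
        intro a ha b hb hab
        simp only [Finset.coe_singleton, Set.mem_singleton_iff] at ha hb
        subst ha; subst hb; exact G.loopless.irrefl _ hab
      refine ⟨?_, hindv, hindw, hnid, ?_, ?_, ?_⟩
      · simp [Set.disjoint_singleton, Ne.symm hwv]
      · rintro ⟨-, hdom⟩
        rcases hdom v with hv | ⟨u, hu, hadju⟩
        · simp only [Finset.coe_singleton, Set.mem_singleton_iff] at hv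
          exact hwv hv.symm
        · simp only [Finset.coe_singleton, Set.mem_singleton_iff] at hu
          subst hu
          exact hadj hadju.symm
      · intro a ha b hb hab
        simp only [Finset.coe_singleton, Set.mem_union, Set.mem_singleton_iff] at ha hb
        rcases ha with rfl | rfl <;> rcases hb with rfl | rfl
        · exact G.loopless.irrefl _ hab
        · exact hadj hab
        · exact hadj hab.symm
        · exact G.loopless.irrefl _ hab
      · have := hpair v w (Ne.symm hwv) hadj
        intro x
        rcases this x with hx | ⟨u, hu, hadju⟩
        · have hx' : x = v ∨ x = w := by simpa using hx
          left; rcases hx' with rfl | rfl <;> simp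
        · have hu' : u = v ∨ u = w := by simpa using hu
          exact Or.inr ⟨u, by rcases hu' with rfl | rfl <;> simp, hadju⟩
  have hcardπ : π.card = Fintype.card V := by
    rw [hπdef, Finset.card_image_of_injective _ (fun a b h => by simpa using h)]
    simp
  -- upper bound: any partition has at most |V| classes
  have hub : ∀ k ∈ {k | ∃ π : Finset (Finset V), IsICPartition G π ∧ π.card = k},
      k ≤ Fintype.card V := by
    rintro k ⟨σ, ⟨⟨hne, huniq⟩, -⟩, rfl⟩
    rcases σ.eq_empty_or_nonempty with rfl | ⟨A0, hA0⟩
    · simp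
    obtain ⟨v0, -⟩ := hne A0 hA0
    have : σ.card ≤ Finset.univ.card :=
      Finset.card_le_card_of_injOn
        (fun A => if h : A.Nonempty then h.choose else v0)
        (fun _ _ => Finset.mem_univ _)
        (by
          intro A hA B hB hfAB
          simp only [Finset.mem_coe] at hA hB
          have hAne := hne A hA
          have hBne := hne B hB
          simp only [dif_pos hAne, dif_pos hBne] at hfAB
          have hxA : hAne.choose ∈ A := hAne.choose_spec
          have hxB : hAne.choose ∈ B := hfAB ▸ hBne.choose_spec
          obtain ⟨C, -, hC⟩ := huniq hAne.choose
          rw [hC A ⟨hA, hxA⟩, hC B ⟨hB, hxB⟩])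
    simpa using this
  have hmemS : Fintype.card V ∈
      {k | ∃ π : Finset (Finset V), IsICPartition G π ∧ π.card = k} :=
    ⟨π, hic, hcardπ⟩
  exact le_antisymm (csSup_le ⟨_, hmemS⟩ hub) (le_csSup ⟨Fintype.card V, hub⟩ hmemS)


end ICNL
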